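/- Let e be an element of a V-algebra E such that x := e - e² satisfies: x lies in an ideal J, φ(x) ∈ J for all power series φ ∈ tℤ[[t]] (evaluation makes sense, e.g., J is complete in a suitable topology in which powers of x converge). Define φ(x) := Σ_{n≥1} binom(2n-1, n) x^n. Then ê := e + (2e-1)·φ(x) satisfies ê² = ê and ê - e ∈ J. Equivalently, the formal power series φ(t) = Σ_{n≥1} binom(2n-1,n) t^n in ℤ[[t]] satisfies φ(t)² + φ(t) = t/(1-4t) in ℤ[[t]]. -/

import Mathlib

/-!
Statement 5: The Cuntz–Quillen idempotent lifting Ansatz.  In any ring `E`, if `y` commutes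
with `e` and satisfies `(y² + y)(1 - 4x) = x` with `x = e - e²`, then `ê := e + (2e-1)y` is
an idempotent with `ê - e = (2e-1)y ∈ J` whenever `y ∈ J` for a (left) ideal `J`.
Equivalently, the formal power series `φ(t) = Σ_{n≥1} C(2n-1, n) tⁿ ∈ ℤ[[t]]` satisfies
`φ(t)² + φ(t) = t/(1 - 4t)`, i.e. `(1 - 4t)(φ² + φ) = t`.
-/

open PowerSeries

noncomputable def cqSeries : PowerSeries ℤ :=
  PowerSeries.mk fun n => if n = 0 then 0 else (Nat.choose (2 * n - 1) n : ℤ)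

namespace CQAux

open Finset

noncomputable def c (k : ℕ) : ℤ := (Nat.centralBinom k : ℤ)
noncomputable def s (n : ℕ) : ℤ := ∑ k ∈ range (n + 1), c k * c (n - k)
noncomputable def u (n : ℕ) : ℤ := ∑ k ∈ range (n + 1), (k : ℤ) * c k * c (n - k)

lemma refl_sum (m : ℕ) :
    ∑ k ∈ range (m + 1), ((m : ℤ) - k) * c k * c (m - k) = u m := by
  rw [u, ← Finset.sum_range_reflect (fun k => (k : ℤ) * c k * c (m - k)) (m + 1)]
  apply Finset.sum_congr rfl
  intro k hk
  have hk' : k ≤ m := Nat.lt_succ_iff.mp (Finset.mem_range.mp hk)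
  have h1 : m + 1 - 1 - k = m - k := by omega
  have h2 : m - (m - k) = k := Nat.sub_sub_self hk'
  have h3 : ((m - k : ℕ) : ℤ) = (m : ℤ) - k := by
    push_cast [hk']; ring
  rw [h1, h2, h3]
  ring

lemma two_u (m : ℕ) : 2 * u m = m * s m := by
  have : u m + u m = ∑ k ∈ range (m + 1), ((m : ℤ) - k) * c k * c (m - k)
      + ∑ k ∈ range (m + 1), (k : ℤ) * c k * c (m - k) := by
    rw [refl_sum]; rw [u]
  rw [two_mul, this, ← Finset.sum_add_distrib, s, Finset.mul_sum]
  apply Finset.sum_congr rfl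
  intro k hk
  ring

lemma u_succ (n : ℕ) : u (n + 1) = 4 * u n + 2 * s n := by
  rw [u, Finset.sum_range_succ' (fun k => (k : ℤ) * c k * c (n + 1 - k)) (n + 1)]
  simp only [Nat.cast_zero, zero_mul]
  rw [add_zero]
  have : ∀ j ∈ range (n + 1), ((j + 1 : ℕ) : ℤ) * c (j + 1) * c (n + 1 - (j + 1))
      = 4 * ((j : ℤ) * c j * c (n - j)) + 2 * (c j * c (n - j)) := by
    intro j hj
    have hcb : ((j + 1 : ℕ) : ℤ) * c (j + 1) = 2 * (2 * j + 1) * c j := by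
      unfold c
      exact_mod_cast Nat.succ_mul_centralBinom_succ j
    have h4 : n + 1 - (j + 1) = n - j := by omega
    rw [h4, hcb]
    ring
  rw [Finset.sum_congr rfl this, Finset.sum_add_distrib, ← Finset.mul_sum, ← Finset.mul_sum]
  rw [← u, ← s]

lemma conv_sum (n : ℕ) : s n = 4 ^ n := by
  induction n with
  | zero => simp [s, c, Nat.centralBinom]
  | succ n ih =>
    have key : ((n : ℤ) + 1) * s (n + 1) = ((n : ℤ) + 1) * 4 ^ (n + 1) := by
      have h1 := two_u (n + 1)
      have h2 := u_succ n
      have h3 := two_u n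
      push_cast at h1
      linear_combination -h1 + 2 * h2 + 4 * h3 + (4 * (n : ℤ) + 4) * ih
    exact mul_left_cancel₀ (by positivity) key

noncomputable def cbS : PowerSeries ℤ := PowerSeries.mk c
noncomputable def fourS : PowerSeries ℤ := PowerSeries.mk fun n => (4 : ℤ) ^ n

lemma hA : cbS = 2 * cqSeries + 1 := by
  ext n
  simp only [cbS, cqSeries, coeff_mk, map_add, map_mul]
  cases n with
  | zero => simp [c, Nat.centralBinom]
  | succ m =>
    have h2 : (2 : PowerSeries ℤ) = C (2 : ℤ) := by simp
    rw [h2]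
    simp only [coeff_C_mul, coeff_mk, coeff_one]
    have : 2 * ((2 * (m+1) - 1).choose (m+1)) = Nat.centralBinom (m+1) := by
      have h2' : 2 * (m + 1) - 1 = 2 * m + 1 := by omega
      rw [h2']
      have h1 : (2 * (m + 1)).choose (m + 1)
          = (2 * m + 1).choose m + (2 * m + 1).choose (m + 1) := by
        have h : 2 * (m + 1) = (2 * m + 1) + 1 := by ring
        rw [h]
        exact Nat.choose_succ_succ (2 * m + 1) m ▸ rfl
      have h3 : (2 * m + 1).choose m = (2 * m + 1).choose (m + 1) := by
        have := Nat.choose_symm (show m + 1 ≤ 2 * m + 1 by omega)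
        simpa [show 2 * m + 1 - (m + 1) = m by omega] using this
      rw [Nat.centralBinom]
      omega
    simp only [Nat.succ_ne_zero, if_neg, c]
    push_cast [← this]
    ring

lemma hB : cbS * cbS = fourS := by
  ext n
  rw [cbS, fourS, coeff_mk, PowerSeries.coeff_mul]
  rw [Finset.Nat.sum_antidiagonal_eq_sum_range_succ_mk]
  simpa only [coeff_mk, s, Nat.succ_eq_add_one] using conv_sum n

lemma hC : (1 - 4 * X) * fourS = 1 := by
  ext n
  rw [sub_mul, one_mul, map_sub]
  cases n with
  | zero => simp [fourS]
  | succ m =>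
    have h4 : (4 : PowerSeries ℤ) = C (4 : ℤ) := by simp
    rw [h4, mul_assoc, coeff_C_mul]
    rw [PowerSeries.coeff_succ_X_mul]
    simp [fourS, pow_succ]
    ring

lemma partA : (1 - 4 * (PowerSeries.X : PowerSeries ℤ)) * (cqSeries ^ 2 + cqSeries)
    = PowerSeries.X := by
  have hB' : (2 * cqSeries + 1) * (2 * cqSeries + 1) = fourS := by rw [← hA]; exact hB
  have h4ne : (4 : PowerSeries ℤ) ≠ 0 := by
    intro h
    have := congrArg (constantCoeff : PowerSeries ℤ →+* ℤ) h
    rw [map_ofNat, map_zero] at this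
    norm_num at this
  apply mul_left_cancel₀ h4ne
  linear_combination (1 - 4 * (PowerSeries.X : PowerSeries ℤ)) * hB' + hC

end CQAux

theorem cuntz_quillen_idempotent_lifting :
    ((1 - 4 * (PowerSeries.X : PowerSeries ℤ)) * (cqSeries ^ 2 + cqSeries)
        = PowerSeries.X) ∧
    (∀ (E : Type) (_ : Ring E) (e y : E) (J : Ideal E),
      y * e = e * y →
      (y ^ 2 + y) * (1 - 4 * (e - e ^ 2)) = e - e ^ 2 →
      y ∈ J →
      (e + (2 * e - 1) * y) ^ 2 = e + (2 * e - 1) * y ∧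
        (e + (2 * e - 1) * y) - e ∈ J) := by
  refine ⟨CQAux.partA, ?_⟩
  intro E _ e y J hy h hyJ
  have hy' : ∀ z : E, y * (e * z) = e * (y * z) := fun z => by
    rw [← mul_assoc, hy, mul_assoc]
  have key : (e + (2 * e - 1) * y) ^ 2 - (e + (2 * e - 1) * y)
      = (y ^ 2 + y) * (1 - 4 * (e - e ^ 2)) - (e - e ^ 2) := by
    simp only [pow_two]
    noncomm_ring
    simp only [mul_assoc, hy, hy']
    abel
  rw [h, sub_self] at key
  refine ⟨sub_eq_zero.mp key, ?_⟩
  simpa using J.mul_mem_left (2 * e - 1) hyJ
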